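/- Let G be an abelian bi-Δ-group and m ≥ 1, and suppose there exists a retraction π_m : 𝔥_m G → Z_m G, i.e., a group homomorphism with π_m(x) = x for all x ∈ Z_m G. Then for every n ≥ m the endomorphism e_m^{(n)} = H_{m,n} ∘ i_m ∘ π_m ∘ p_{m,n} of 𝔥_n G (where i_m : Z_m G ↪ 𝔥_m G is the inclusion) is idempotent: e_m^{(n)} ∘ e_m^{(n)} = e_m^{(n)}. -/
import Mathlib


universe u

section

variable (G : ℕ → Type u) [∀ n, AddCommGroup (G n)]
variable (d : ∀ n : ℕ, ℕ → (G (n + 1) →+ G n))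
variable (δ : ∀ n : ℕ, ℕ → (G n →+ G (n + 1)))

/-- The axioms of an (abelian, additively written) bi-Δ-group: a sequence of groups `G n`
with faces `d n j : G (n+1) →+ G n` (for `j ≤ n+1`) and cofaces
`δ n i : G n →+ G (n+1)` (for `i ≤ n+1`), satisfying the simplicial-type identities. -/
structure IsBiDelta : Prop where
  face_face : ∀ n i j : ℕ, i ≤ j → j ≤ n + 1 → ∀ x : G (n + 2),
    d n i (d (n + 1) (j + 1) x) = d n j (d (n + 1) i x)
  coface_coface : ∀ n i j : ℕ, j ≤ i → i ≤ n + 1 → ∀ x : G n,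
    δ (n + 1) j (δ n i x) = δ (n + 1) (i + 1) (δ n j x)
  face_coface_lt : ∀ n i j : ℕ, j ≤ i → i ≤ n + 1 → ∀ x : G (n + 1),
    d (n + 1) j (δ (n + 1) (i + 1) x) = δ n i (d n j x)
  face_coface_eq : ∀ n i : ℕ, i ≤ n + 1 → ∀ x : G n, d n i (δ n i x) = x
  face_coface_gt : ∀ n i j : ℕ, i ≤ j → j ≤ n + 1 → ∀ x : G (n + 1),
    d (n + 1) (j + 1) (δ (n + 1) i x) = δ n i (d n j x)

/-- The `n`-th Cohen group `𝔥_n G = {x ∈ G_n : d_0 x = d_1 x = ⋯ = d_n x}`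
(with `𝔥_0 G = G_0`), as a subgroup of `G n`. -/
def cohenAll : ∀ n : ℕ, AddSubgroup (G n)
  | 0 => ⊤
  | m + 1 =>
    { carrier := { x : G (m + 1) | ∀ j, j ≤ m + 1 → d m j x = d m 0 x }
      add_mem' := fun {a b} ha hb j hj => by
        simp only [Set.mem_setOf_eq] at ha hb ⊢
        rw [map_add, map_add, ha j hj, hb j hj]
      zero_mem' := fun j hj => by simp
      neg_mem' := fun {a} ha j hj => by
        simp only [Set.mem_setOf_eq] at ha ⊢
        rw [map_neg, map_neg, ha j hj] }

/-- The `n`-th Moore cycle group `Z_n G = ⋂_{j=0}^n ker d_j` (with `Z_0 G = G_0`),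
as a subgroup of `G n`. -/
def mooreAll : ∀ n : ℕ, AddSubgroup (G n)
  | 0 => ⊤
  | m + 1 =>
    { carrier := { x : G (m + 1) | ∀ j, j ≤ m + 1 → d m j x = 0 }
      add_mem' := fun {a b} ha hb j hj => by
        simp only [Set.mem_setOf_eq] at ha hb ⊢
        rw [map_add, ha j hj, hb j hj, add_zero]
      zero_mem' := fun j hj => by simp
      neg_mem' := fun {a} ha j hj => by
        simp only [Set.mem_setOf_eq] at ha ⊢
        rw [map_neg, ha j hj, neg_zero] }

/-- Iterated cofaces `d^{c(r-1)} d^{c(r-2)} ⋯ d^{c(0)}(x)` along a tuple `c` of coface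
indices (`c 0` is applied first, at level `k`). -/
def iterCoface (k : ℕ) : ∀ r : ℕ, (Fin r → ℕ) → G k → G (k + r)
  | 0, _, x => x
  | r + 1, c, x => δ (k + r) (c (Fin.last r)) (iterCoface k r (fun i => c i.castSucc) x)

open Classical in
/-- The James–Hopf homomorphism `H_{k,n} : G_k → G_n` (`n = k + r`): the sum, over all
strictly increasing tuples `0 ≤ i_1 < i_2 < ⋯ < i_{n-k} ≤ n`, of
`d^{i_{n-k}} d^{i_{n-k-1}} ⋯ d^{i_1}(x)`. -/
noncomputable def jamesHopf (k r : ℕ) (x : G k) : G (k + r) :=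
  ∑ c ∈ Finset.univ.filter (fun c : Fin r → Fin (k + r + 1) => StrictMono c),
    iterCoface G δ k r (fun i => (c i : ℕ)) x

/-- `σ_{m+1} = H_{m,m+1} = Σ_{i=0}^{m+1} d^i : G m →+ G (m+1)` (as a function). -/
def sigmaMap (m : ℕ) (x : G m) : G (m + 1) :=
  ∑ i ∈ Finset.range (m + 2), δ m i x

/-- The composite `σ_{s+r} ∘ σ_{s+r-1} ∘ ⋯ ∘ σ_{s+1} : G s → G (s+r)`. -/
def sigmaIter (s : ℕ) : ∀ r : ℕ, G s → G (s + r)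
  | 0, x => x
  | r + 1, x => sigmaMap G δ (s + r) (sigmaIter s r x)

/-- The `r`-fold iterate of the zeroth face `d_0 : G (m+r) → G m`,
i.e. `p_{m+1} ∘ p_{m+2} ∘ ⋯ ∘ p_{m+r}` on Cohen groups. -/
def dIter (m : ℕ) : ∀ r : ℕ, G (m + r) → G m
  | 0, x => x
  | r + 1, x => dIter m r (d (m + r) 0 x)

end

section aux

variable {G : ℕ → Type u} [∀ n, AddCommGroup (G n)]
variable {d : ∀ n : ℕ, ℕ → (G (n + 1) →+ G n)}
variable {δ : ∀ n : ℕ, ℕ → (G n →+ G (n + 1))}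

lemma iterCoface_zero_arg (k : ℕ) : ∀ (r : ℕ) (c : Fin r → ℕ),
    iterCoface G δ k r c (0 : G k) = 0
  | 0, _ => rfl
  | r + 1, c => by
    show δ (k + r) (c (Fin.last r)) (iterCoface G δ k r _ 0) = 0
    rw [iterCoface_zero_arg k r, map_zero]

lemma iter_pos_zero (h : IsBiDelta G d δ) (k : ℕ) :
    ∀ (r : ℕ) (c : Fin (r + 1) → ℕ), StrictMono c → (∀ i, 1 ≤ c i) →
    (∀ i, c i ≤ k + r + 2) → ∀ z : G (k + 1), d k 0 z = 0 →
    d (k + 1 + r) 0 (iterCoface G δ (k + 1) (r + 1) c z) = 0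
  | 0, c, hc, hc1, hc2, z, hz => by
    show d (k + 1) 0 (δ (k + 1) (c (Fin.last 0)) (iterCoface G δ (k+1) 0 _ z)) = 0
    obtain ⟨i, hi⟩ : ∃ i, c (Fin.last 0) = i + 1 :=
      ⟨c (Fin.last 0) - 1, by have := hc1 (Fin.last 0); omega⟩
    rw [hi, h.face_coface_lt k i 0 (Nat.zero_le _)
      (by have := hc2 (Fin.last 0); omega) _]
    show δ k i (d k 0 z) = 0
    rw [hz, map_zero]
  | r + 1, c, hc, hc1, hc2, z, hz => by
    show d (k + 1 + r + 1) 0 (δ (k + 1 + r + 1) (c (Fin.last (r + 1)))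
      (iterCoface G δ (k + 1) (r + 1) (fun i => c i.castSucc) z)) = 0
    obtain ⟨i, hi⟩ : ∃ i, c (Fin.last (r + 1)) = i + 1 :=
      ⟨c (Fin.last (r + 1)) - 1, by have := hc1 (Fin.last (r + 1)); omega⟩
    rw [hi, h.face_coface_lt (k + 1 + r) i 0 (Nat.zero_le _)
      (by have := hc2 (Fin.last (r + 1)); omega) _]
    rw [iter_pos_zero h k r (fun i => c i.castSucc)
      (fun a b hab => hc (by simpa using hab)) (fun i => hc1 _)
      (fun i => by
        show c i.castSucc ≤ k + r + 2
        have h1 : c i.castSucc < c (Fin.last (r + 1)) := hc (Fin.castSucc_lt_last i)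
        have h2 := hc2 (Fin.last (r + 1)); omega) z hz, map_zero]

lemma iter_zero_shift (h : IsBiDelta G d δ) (k : ℕ) :
    ∀ (r : ℕ) (c : Fin (r + 1) → ℕ), StrictMono c → c 0 = 0 →
    (∀ i, c i ≤ k + r + 2) → ∀ z : G (k + 1),
    d (k + 1 + r) 0 (iterCoface G δ (k + 1) (r + 1) c z) =
      iterCoface G δ (k + 1) r (fun i => c i.succ - 1) z
  | 0, c, hc, hc0, hc2, z => by
    show d (k + 1) 0 (δ (k + 1) (c (Fin.last 0)) (iterCoface G δ (k+1) 0 _ z)) = z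
    have : c (Fin.last 0) = 0 := by rw [show Fin.last 0 = 0 from rfl, hc0]
    rw [this]
    exact h.face_coface_eq (k + 1) 0 (Nat.zero_le _) z
  | r + 1, c, hc, hc0, hc2, z => by
    show d (k + 1 + r + 1) 0 (δ (k + 1 + r + 1) (c (Fin.last (r + 1)))
      (iterCoface G δ (k + 1) (r + 1) (fun i => c i.castSucc) z)) = _
    have hpos : 1 ≤ c (Fin.last (r + 1)) := by
      have : c 0 < c (Fin.last (r + 1)) := hc (by
        rw [Fin.lt_def]; simp [Fin.last])
      omega
    obtain ⟨i, hi⟩ : ∃ i, c (Fin.last (r + 1)) = i + 1 :=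
      ⟨c (Fin.last (r + 1)) - 1, by omega⟩
    rw [hi, h.face_coface_lt (k + 1 + r) i 0 (Nat.zero_le _)
      (by have := hc2 (Fin.last (r + 1)); omega) _]
    rw [iter_zero_shift h k r (fun i => c i.castSucc)
      (fun a b hab => hc (by simpa using hab)) (by simpa using hc0)
      (fun i => by
        show c i.castSucc ≤ k + r + 2
        have h1 : c i.castSucc < c (Fin.last (r + 1)) := hc (Fin.castSucc_lt_last i)
        have h2 := hc2 (Fin.last (r + 1)); omega) z]
    show δ (k + 1 + r) i (iterCoface G δ (k + 1) r (fun j => c j.succ.castSucc - 1) z)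
      = δ (k + 1 + r) ((fun j => c j.succ - 1) (Fin.last r))
        (iterCoface G δ (k + 1) r (fun j => c j.castSucc.succ - 1) z)
    have e1 : (fun j : Fin r => c j.succ.castSucc - 1) =
        (fun j : Fin r => c j.castSucc.succ - 1) := by
      funext j; rw [Fin.succ_castSucc]
    have e2 : ((fun j : Fin (r + 1) => c j.succ - 1) (Fin.last r)) = i := by
      show c (Fin.last r).succ - 1 = i
      rw [Fin.succ_last, hi]; omega
    rw [e1, e2]

lemma jamesHopf_zero_fold (s : ℕ) (z : G s) : jamesHopf G δ s 0 z = z := by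
  haveI : Unique (Fin 0 → Fin (s + 0 + 1)) :=
    ⟨⟨fun i => i.elim0⟩, fun f => funext fun i => i.elim0⟩
  unfold jamesHopf
  have e : (Finset.univ.filter fun c : Fin 0 → Fin (s + 0 + 1) => StrictMono c)
      = Finset.univ := Finset.filter_true_of_mem fun c _ a b hab => a.elim0
  rw [e, Fintype.sum_unique]
  rfl

open Classical in
lemma d0_jamesHopf (h : IsBiDelta G d δ) (k r : ℕ) (z : G (k + 1))
    (hz : d k 0 z = 0) :
    d (k + 1 + r) 0 (jamesHopf G δ (k + 1) (r + 1) z) = jamesHopf G δ (k + 1) r z := by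
  unfold jamesHopf
  rw [map_sum]
  rw [← Finset.sum_filter_add_sum_filter_not
    (Finset.univ.filter fun c : Fin (r + 1) → Fin (k + 1 + (r + 1) + 1) => StrictMono c)
    (fun c => c 0 = 0)]
  have hvanish : ∀ c ∈ (Finset.univ.filter
      fun c : Fin (r + 1) → Fin (k + 1 + (r + 1) + 1) => StrictMono c).filter
      (fun c => ¬ c 0 = 0),
      d (k + 1 + r) 0 (iterCoface G δ (k + 1) (r + 1) (fun i => ((c i : ℕ))) z) = 0 := by
    intro c hcmem
    simp only [Finset.mem_filter, Finset.mem_univ, true_and] at hcmem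
    obtain ⟨hmono, hne⟩ := hcmem
    refine iter_pos_zero h k r _ (fun a b hab => by exact_mod_cast hmono hab) ?_ ?_ z hz
    · intro i
      have h0 : (1 : ℕ) ≤ c 0 := by
        rcases Nat.eq_zero_or_pos (c 0 : ℕ) with hh | hh
        · exact absurd (Fin.ext (by simp [hh])) hne
        · exact hh
      have : c 0 ≤ c i := hmono.monotone (Fin.zero_le i)
      calc (1:ℕ) ≤ (c 0 : ℕ) := h0
        _ ≤ (c i : ℕ) := this
    · intro i
      have := (c i).isLt
      omega
  rw [Finset.sum_eq_zero hvanish, add_zero]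
  refine Finset.sum_nbij'
    (fun c => fun i : Fin r => (⟨(c i.succ : ℕ) - 1, ?_⟩ : Fin (k + 1 + r + 1)))
    (fun c => Fin.cons 0 (fun i => (c i).succ)) ?_ ?_ ?_ ?_ ?_
  · have := (c i.succ).isLt
    omega
  · intro c hcmem
    simp only [Finset.mem_filter, Finset.mem_univ, true_and] at hcmem ⊢
    obtain ⟨hmono, hzero⟩ := hcmem
    intro a b hab
    have h1 : c a.succ < c b.succ := hmono (Fin.succ_lt_succ_iff.mpr hab)
    have h2 : c 0 < c a.succ := hmono (Fin.succ_pos a)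
    have h3 : (c 0 : ℕ) = 0 := by rw [hzero]; rfl
    simp only [Fin.lt_def] at h1 h2 ⊢
    omega
  · intro c hcmem
    simp only [Finset.mem_filter, Finset.mem_univ, true_and] at hcmem ⊢
    constructor
    · intro a b hab
      rcases Fin.eq_zero_or_eq_succ a with rfl | ⟨a', rfl⟩
      · rcases Fin.eq_zero_or_eq_succ b with rfl | ⟨b', rfl⟩
        · exact absurd hab (lt_irrefl _)
        · simp only [Fin.cons_zero, Fin.cons_succ]
          exact Fin.succ_pos _
      · rcases Fin.eq_zero_or_eq_succ b with rfl | ⟨b', rfl⟩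
        · exact absurd (hab.trans (Fin.succ_pos a')) (lt_irrefl _)
        · simp only [Fin.cons_succ]
          exact Fin.succ_lt_succ_iff.mpr (hcmem (Fin.succ_lt_succ_iff.mp hab))
    · rfl
  · intro c hcmem
    simp only [Finset.mem_filter, Finset.mem_univ, true_and] at hcmem
    obtain ⟨hmono, hzero⟩ := hcmem
    funext a
    rcases Fin.eq_zero_or_eq_succ a with rfl | ⟨a', rfl⟩
    · simp only [Fin.cons_zero]; exact hzero.symm
    · simp only [Fin.cons_succ]
      have h2 : c 0 < c a'.succ := hmono (Fin.succ_pos a')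
      have h3 : (c 0 : ℕ) = 0 := by rw [hzero]; rfl
      apply Fin.ext
      simp only [Fin.val_succ]
      omega
  · intro c hcmem
    funext a
    apply Fin.ext
    simp only [Fin.cons_succ, Fin.val_succ]
    omega
  · intro c hcmem
    simp only [Finset.mem_filter, Finset.mem_univ, true_and] at hcmem
    obtain ⟨hmono, hzero⟩ := hcmem
    have := iter_zero_shift h k r (fun i => ((c i : ℕ)))
      (fun a b hab => by exact_mod_cast hmono hab)
      (by show (c 0 : ℕ) = 0; simp [hzero])
      (fun i => by show (c i : ℕ) ≤ k + r + 2; have := (c i).isLt; omega) z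
    rw [this]

lemma dIter_jamesHopf (h : IsBiDelta G d δ) (k : ℕ) :
    ∀ (r : ℕ) (z : G (k + 1)), d k 0 z = 0 →
    dIter G d (k + 1) r (jamesHopf G δ (k + 1) r z) = z
  | 0, z, hz => by rw [jamesHopf_zero_fold]; rfl
  | r + 1, z, hz => by
    show dIter G d (k + 1) r (d (k + 1 + r) 0 (jamesHopf G δ (k + 1) (r + 1) z)) = z
    rw [d0_jamesHopf h k r z hz, dIter_jamesHopf h k r z hz]

end aux

/-- Let `G` be an abelian bi-Δ-group, `m = a + 1 ≥ 1`, `n = m + r ≥ m`,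
and suppose `π : 𝔥_m G → Z_m G` is a homomorphism restricting to the identity on
`Z_m G`. Then the endomorphism `e = H_{m,n} ∘ i_m ∘ π ∘ p_{m,n}` of `𝔥_n G` is
idempotent: `e (e x) = e x` for every `x ∈ 𝔥_n G`. (The membership proofs `h1`, `h3`
needed to apply `π` are consequences of the bi-Δ axioms and are taken as arguments.) -/



theorem stmt15 (G : ℕ → Type u) [∀ n, AddCommGroup (G n)]
    (d : ∀ n : ℕ, ℕ → (G (n + 1) →+ G n)) (δ : ∀ n : ℕ, ℕ → (G n →+ G (n + 1)))
    (h : IsBiDelta G d δ) (a r : ℕ)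
    (π : ↥(cohenAll G d (a + 1)) →+ ↥(mooreAll G d (a + 1)))
    (hπ : ∀ x : ↥(cohenAll G d (a + 1)), (x : G (a + 1)) ∈ mooreAll G d (a + 1) →
      ((π x : ↥(mooreAll G d (a + 1))) : G (a + 1)) = (x : G (a + 1)))
    (x : G (a + 1 + r)) (hx : x ∈ cohenAll G d (a + 1 + r))
    (h1 : dIter G d (a + 1) r x ∈ cohenAll G d (a + 1))
    (h3 : dIter G d (a + 1) r
        (jamesHopf G δ (a + 1) r
          ((π ⟨dIter G d (a + 1) r x, h1⟩ : ↥(mooreAll G d (a + 1))) : G (a + 1)))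
        ∈ cohenAll G d (a + 1)) :
    jamesHopf G δ (a + 1) r
        ((π ⟨dIter G d (a + 1) r
            (jamesHopf G δ (a + 1) r
              ((π ⟨dIter G d (a + 1) r x, h1⟩ : ↥(mooreAll G d (a + 1))) : G (a + 1))),
          h3⟩ : ↥(mooreAll G d (a + 1))) : G (a + 1))
      = jamesHopf G δ (a + 1) r
          ((π ⟨dIter G d (a + 1) r x, h1⟩ : ↥(mooreAll G d (a + 1))) : G (a + 1)) := by
  set w := π ⟨dIter G d (a + 1) r x, h1⟩ with hw
  have hwmem : (w : G (a + 1)) ∈ mooreAll G d (a + 1) := w.2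
  have hw0 : (∀ j, j ≤ a + 1 → d a j (w : G (a + 1)) = 0) := hwmem
  have key : dIter G d (a + 1) r (jamesHopf G δ (a + 1) r (w : G (a + 1)))
      = (w : G (a + 1)) :=
    dIter_jamesHopf h a r _ (hw0 0 (Nat.zero_le _))
  have hmem : ((⟨dIter G d (a + 1) r (jamesHopf G δ (a + 1) r (w : G (a + 1))), h3⟩ :
      ↥(cohenAll G d (a + 1))) : G (a + 1)) ∈ mooreAll G d (a + 1) := by
    show dIter G d (a + 1) r (jamesHopf G δ (a + 1) r (w : G (a + 1))) ∈ _
    rw [key]; exact hwmem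
  have e := hπ _ hmem
  rw [e]
  show jamesHopf G δ (a + 1) r
      (dIter G d (a + 1) r (jamesHopf G δ (a + 1) r (w : G (a + 1)))) = _
  rw [key]
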